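/- Let d ≥ 4 and E ⊆ 𝔽_q^d with |E| ≥ C·q^((d+2)/2) for a sufficiently large constant C. Then the number of pairs (x,y) ∈ E × E with x·y = 0 is at most 2|E|²/q. -/

import Mathlib

open Finset

private lemma addchar_map_sum {F : Type} [AddCommGroup F] (ψ : AddChar F ℂ) {ι : Type}
    (s : Finset ι) (f : ι → F) : ψ (∑ i ∈ s, f i) = ∏ i ∈ s, ψ (f i) := by
  classical
  induction s using Finset.induction_on with
  | empty => simp
  | insert _ _ h ih => rw [Finset.sum_insert h, Finset.prod_insert h, AddChar.map_add_eq_mul, ih]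

private lemma key_bound (F : Type) [Field F] [Fintype F] [DecidableEq F] (d : ℕ)
    (E : Finset (Fin d → F)) :
    (((E ×ˢ E).filter (fun p => (∑ i, p.1 i * p.2 i) = 0)).card : ℝ)
      ≤ (E.card : ℝ) ^ 2 / (Fintype.card F : ℝ)
        + (E.card : ℝ) * (Fintype.card F : ℝ) ^ ((d : ℝ) / 2) := by
  classical
  set q : ℕ := Fintype.card F with hqdef
  have hq : 0 < q := Fintype.card_pos
  have hqR : (0:ℝ) < q := by exact_mod_cast hq
  obtain ⟨ψ, hψ1⟩ := AddChar.exists_apply_ne_zero.2 (one_ne_zero : (1:F) ≠ 0)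
  -- Step A
  have hA : ∀ a : F, ∑ t : F, ψ (t * a) = if a = 0 then (q : ℂ) else 0 := by
    intro a
    split_ifs with ha
    · subst ha; simp [Finset.card_univ]; rfl
    · have hne : ψ.mulShift a ≠ 0 := by
        rw [AddChar.ne_zero_iff]
        exact ⟨a⁻¹, by rw [AddChar.mulShift_apply, mul_inv_cancel₀ ha]; exact hψ1⟩
      calc ∑ t : F, ψ (t * a) = ∑ t : F, ψ.mulShift a t := by
            simp [AddChar.mulShift_apply, mul_comm]
        _ = 0 := AddChar.sum_eq_zero_iff_ne_zero.2 hne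
  -- Step B
  have hB : ∀ w : Fin d → F, ∑ x : Fin d → F, ψ (∑ i, x i * w i)
      = if w = 0 then ((q : ℂ)) ^ d else 0 := by
    intro w
    have h1 : ∑ x : Fin d → F, ψ (∑ i, x i * w i)
        = ∏ i : Fin d, ∑ t : F, ψ (t * w i) := by
      rw [Fintype.prod_sum]
      exact Fintype.sum_congr _ _ fun x => addchar_map_sum ψ _ _
    rw [h1]
    split_ifs with hw
    · subst hw
      simp only [Pi.zero_apply, hA, if_pos rfl]
      simp
    · obtain ⟨i, hi⟩ : ∃ i, w i ≠ 0 := by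
        by_contra h; push_neg at h; exact hw (funext h)
      exact Finset.prod_eq_zero (Finset.mem_univ i) (by rw [hA, if_neg hi])
  -- the character sums
  set S : F → ℂ := fun t => ∑ p ∈ E ×ˢ E, ψ (t * ∑ i, p.1 i * p.2 i) with hSdef
  set N : ℕ := ((E ×ˢ E).filter (fun p => (∑ i, p.1 i * p.2 i) = 0)).card with hNdef
  -- Step C : ∑ t, S t = q * N
  have hC : ∑ t : F, S t = (q : ℂ) * N := by
    rw [hSdef]
    rw [Finset.sum_comm]
    have : ∀ p ∈ E ×ˢ E, ∑ t : F, ψ (t * ∑ i, p.1 i * p.2 i)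
        = if (∑ i, p.1 i * p.2 i) = 0 then (q : ℂ) else 0 := fun p _ => hA _
    rw [Finset.sum_congr rfl this, Finset.sum_ite, Finset.sum_const, Finset.sum_const_zero,
      add_zero, nsmul_eq_mul, hNdef, mul_comm]
  have hS0 : S 0 = ((E.card : ℂ)) ^ 2 := by
    rw [hSdef]
    simp only [zero_mul, AddChar.map_zero_eq_one, Finset.sum_const, Finset.card_product,
      nsmul_eq_mul, mul_one]
    push_cast; ring
  -- Step D
  have hD : ∀ t : F, t ≠ 0 → ‖S t‖ ≤ (E.card : ℝ) * ((q:ℝ)) ^ ((d:ℝ)/2) := by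
    intro t ht
    set T : (Fin d → F) → ℂ := fun x => ∑ y ∈ E, ψ (t * ∑ i, x i * y i) with hTdef
    have hST : S t = ∑ x ∈ E, T x := by
      show ∑ p ∈ E ×ˢ E, ψ (t * ∑ i, p.1 i * p.2 i)
        = ∑ x ∈ E, ∑ y ∈ E, ψ (t * ∑ i, x i * y i)
      exact Finset.sum_product E E _
    have hTx : ∀ x : Fin d → F, ((‖T x‖ ^ 2 : ℝ) : ℂ)
        = ∑ y ∈ E, ∑ y' ∈ E, ψ (∑ i, x i * (t * (y i - y' i))) := by
      intro x
      have h0 : ((‖T x‖ ^ 2 : ℝ) : ℂ) = T x * (starRingEnd ℂ) (T x) := by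
        rw [Complex.mul_conj, Complex.normSq_eq_norm_sq]
      rw [h0]
      have hT : T x = ∑ y ∈ E, ψ (t * ∑ i, x i * y i) := rfl
      rw [hT, map_sum, Finset.sum_mul_sum]
      refine Finset.sum_congr rfl fun y _ => Finset.sum_congr rfl fun y' _ => ?_
      rw [← AddChar.map_neg_eq_conj, ← AddChar.map_add_eq_mul]
      congr 1
      rw [← sub_eq_add_neg, Finset.mul_sum, Finset.mul_sum, ← Finset.sum_sub_distrib]
      exact Finset.sum_congr rfl fun i _ => by ring
    have h4c : (↑(∑ x : Fin d → F, ‖T x‖ ^ 2) : ℂ) = (E.card : ℂ) * (q:ℂ) ^ d := by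
      rw [Complex.ofReal_sum, Finset.sum_congr rfl fun x _ => hTx x]
      rw [Finset.sum_comm]
      have : ∀ y ∈ E, ∑ x : Fin d → F, ∑ y' ∈ E, ψ (∑ i, x i * (t * (y i - y' i)))
          = ∑ y' ∈ E, ∑ x : Fin d → F, ψ (∑ i, x i * (t * (y i - y' i))) :=
        fun y _ => Finset.sum_comm
      rw [Finset.sum_congr rfl this]
      have hinner : ∀ y ∈ E, ∀ y' ∈ E, ∑ x : Fin d → F, ψ (∑ i, x i * (t * (y i - y' i)))
          = if y = y' then ((q:ℂ)) ^ d else 0 := by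
        intro y _ y' _
        rw [hB (fun i => t * (y i - y' i))]
        by_cases h : y = y'
        · rw [if_pos h, if_pos (by subst h; funext i; simp)]
        · refine (if_neg ?_).trans (if_neg h).symm
          intro hc
          apply h; funext i
          have hci := congrFun hc i
          simp only [Pi.zero_apply, mul_eq_zero, sub_eq_zero] at hci
          rcases hci with h' | h'
          · exact absurd h' ht
          · exact h'
      rw [Finset.sum_congr rfl fun y hy => Finset.sum_congr rfl fun y' hy' => hinner y hy y' hy']
      rw [Finset.sum_congr rfl fun y hy => Finset.sum_ite_eq E y (fun _ => ((q:ℂ))^d)]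
      rw [Finset.sum_congr rfl fun y hy => if_pos hy, Finset.sum_const, nsmul_eq_mul]
    have h4 : ∑ x : Fin d → F, ‖T x‖ ^ 2 = (E.card : ℝ) * (q:ℝ) ^ d := by
      have := h4c
      rw [show ((E.card : ℂ) * (q:ℂ) ^ d) = ((((E.card : ℝ) * (q:ℝ) ^ d : ℝ)) : ℂ) by push_cast; ring] at this
      exact_mod_cast this
    have h1 : ‖S t‖ ≤ ∑ x ∈ E, ‖T x‖ := by rw [hST]; exact norm_sum_le _ _
    have h2 : (∑ x ∈ E, ‖T x‖) ^ 2 ≤ E.card * ∑ x ∈ E, ‖T x‖ ^ 2 := sq_sum_le_card_mul_sum_sq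
    have h3 : ∑ x ∈ E, ‖T x‖ ^ 2 ≤ ∑ x : Fin d → F, ‖T x‖ ^ 2 :=
      Finset.sum_le_sum_of_subset_of_nonneg (Finset.subset_univ E) (fun _ _ _ => sq_nonneg _)
    have hrpow : ((q:ℝ) ^ ((d:ℝ)/2)) ^ 2 = (q:ℝ) ^ d := by
      rw [← Real.rpow_natCast ((q:ℝ) ^ ((d:ℝ)/2)) 2, ← Real.rpow_mul hqR.le,
        ← Real.rpow_natCast (q:ℝ) d]
      norm_num
    have hsq : ‖S t‖ ^ 2 ≤ ((E.card : ℝ) * (q:ℝ) ^ ((d:ℝ)/2)) ^ 2 := by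
      calc ‖S t‖ ^ 2 ≤ (∑ x ∈ E, ‖T x‖) ^ 2 := by
            apply pow_le_pow_left₀ (norm_nonneg _) h1
        _ ≤ E.card * ∑ x ∈ E, ‖T x‖ ^ 2 := h2
        _ ≤ (E.card : ℝ) * ∑ x : Fin d → F, ‖T x‖ ^ 2 :=
            mul_le_mul_of_nonneg_left h3 (Nat.cast_nonneg _)
        _ = (E.card : ℝ) * ((E.card : ℝ) * (q:ℝ)^d) := by rw [h4]
        _ = ((E.card : ℝ) * (q:ℝ) ^ ((d:ℝ)/2)) ^ 2 := by rw [mul_pow, hrpow]; ring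
    have hs := Real.sqrt_le_sqrt hsq
    rwa [Real.sqrt_sq (norm_nonneg _), Real.sqrt_sq (by positivity)] at hs
  -- assemble
  set B : ℝ := (E.card : ℝ) * (q:ℝ) ^ ((d:ℝ)/2) with hBdef
  have hB0 : 0 ≤ B := by positivity
  have hsplit : (q:ℂ) * N - (E.card:ℂ)^2 = ∑ tt ∈ Finset.univ.erase (0:F), S tt := by
    rw [← hC, ← Finset.add_sum_erase _ S (Finset.mem_univ (0:F)), hS0]; ring
  have hnorm : ‖(q:ℂ) * N - (E.card:ℂ)^2‖ ≤ q * B := by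
    rw [hsplit]
    calc ‖∑ tt ∈ Finset.univ.erase (0:F), S tt‖ ≤ ∑ tt ∈ Finset.univ.erase (0:F), ‖S tt‖ :=
          norm_sum_le _ _
      _ ≤ (Finset.univ.erase (0:F)).card • B := Finset.sum_le_card_nsmul _ _ _
            (fun tt htt => hD tt (Finset.ne_of_mem_erase htt))
      _ ≤ (q:ℝ) * B := by
          rw [nsmul_eq_mul]
          apply mul_le_mul_of_nonneg_right _ hB0
          have : (Finset.univ.erase (0:F)).card ≤ q := by
            calc (Finset.univ.erase (0:F)).card ≤ (Finset.univ : Finset F).card :=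
                  Finset.card_le_card (Finset.erase_subset _ _)
              _ = q := by rw [Finset.card_univ]
          exact_mod_cast this
  have hz : ((((N:ℝ) * q - (E.card:ℝ)^2 : ℝ)) : ℂ) = (q:ℂ) * N - (E.card:ℂ)^2 := by
    push_cast; ring
  have habs : |(N:ℝ) * q - (E.card:ℝ)^2| ≤ q * B := by
    rw [← Real.norm_eq_abs, ← Complex.norm_real, hz]; exact hnorm
  have hmain : (N : ℝ) * q ≤ (E.card : ℝ)^2 + q * B := by
    have := le_abs_self ((N:ℝ) * q - (E.card:ℝ)^2)
    linarith
  calc (N : ℝ) ≤ ((E.card : ℝ)^2 + q * B) / q := by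
        rw [le_div_iff₀ hqR]; linarith
    _ = (E.card : ℝ)^2 / q + B := by field_simp


theorem stmt_14 :
    ∃ C : ℝ, 0 < C ∧
      ∀ (F : Type) [Field F] [Fintype F] [DecidableEq F] (d : ℕ), 4 ≤ d →
        ∀ (E : Finset (Fin d → F)),
        (E.card : ℝ) ≥ C * (Fintype.card F : ℝ) ^ (((d : ℝ) + 2) / 2) →
        (((E ×ˢ E).filter (fun p => (∑ i, p.1 i * p.2 i) = 0)).card : ℝ)
          ≤ 2 * (E.card : ℝ) ^ 2 / Fintype.card F := by
  refine ⟨1, one_pos, ?_⟩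
  intro F _ _ _ d hd E hE
  have hq : (0:ℝ) < (Fintype.card F : ℝ) := by exact_mod_cast Fintype.card_pos
  have hkey := key_bound F d E
  rw [one_mul] at hE
  have hsplit : (Fintype.card F : ℝ) ^ (((d:ℝ)+2)/2)
      = (Fintype.card F : ℝ) ^ ((d:ℝ)/2) * (Fintype.card F : ℝ) := by
    rw [show ((d:ℝ)+2)/2 = (d:ℝ)/2 + 1 by ring, Real.rpow_add hq, Real.rpow_one]
  have hE2 : (E.card:ℝ) * (Fintype.card F : ℝ) ^ ((d:ℝ)/2)
      ≤ (E.card:ℝ)^2 / (Fintype.card F : ℝ) := by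
    rw [le_div_iff₀ hq]
    calc (E.card:ℝ) * (Fintype.card F : ℝ) ^ ((d:ℝ)/2) * (Fintype.card F : ℝ)
        = (E.card:ℝ) * ((Fintype.card F : ℝ) ^ (((d:ℝ)+2)/2)) := by rw [hsplit]; ring
      _ ≤ (E.card:ℝ) * (E.card:ℝ) := mul_le_mul_of_nonneg_left hE (Nat.cast_nonneg _)
      _ = (E.card:ℝ)^2 := by ring
  calc (((E ×ˢ E).filter (fun p => (∑ i, p.1 i * p.2 i) = 0)).card : ℝ)
      ≤ (E.card : ℝ)^2 / (Fintype.card F : ℝ)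
        + (E.card:ℝ) * (Fintype.card F : ℝ) ^ ((d:ℝ)/2) := hkey
    _ ≤ (E.card : ℝ)^2 / (Fintype.card F : ℝ) + (E.card : ℝ)^2 / (Fintype.card F : ℝ) := by
        linarith
    _ = 2 * (E.card : ℝ)^2 / (Fintype.card F : ℝ) := by ring
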